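/- Let 𝒪 be a commutative ring, let f, g ∈ 𝒪 be such that the principal ideal (f) is a prime ideal and g ∉ (f), and let h ∈ 𝒪 be arbitrary. Then the sequence 0 → 𝒪/(f, h) → 𝒪/(f, gh) → 𝒪/(f, g) → 0 is exact, where the first map is induced by multiplication by g and the second map is the natural surjection. -/

import Mathlib

open Ideal

/-- Multiplication by `g` induces a well-defined `𝒪`-module map `𝒪/(f,h) → 𝒪/(f,gh)`,
since `g·(f,h) ⊆ (f,gh)`. -/
noncomputable def mulQMap {O : Type*} [CommRing O] (f g h : O) :
    (O ⧸ Ideal.span {f, h}) →ₗ[O] O ⧸ Ideal.span {f, g * h} :=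
  Submodule.mapQ (Ideal.span {f, h}) (Ideal.span {f, g * h}) (LinearMap.lsmul O O g)
    (by
      rw [Ideal.span_le]
      rintro x hx
      simp only [Set.mem_insert_iff, Set.mem_singleton_iff] at hx
      simp only [SetLike.mem_coe, Submodule.mem_comap, LinearMap.lsmul_apply, smul_eq_mul]
      rcases hx with rfl | rfl
      · exact Ideal.mul_mem_left _ g (Ideal.subset_span (Set.mem_insert _ _))
      · exact Ideal.subset_span (Set.mem_insert_of_mem _ rfl))

/-- The natural surjection `𝒪/(f,gh) → 𝒪/(f,g)`. -/
noncomputable def projQMap {O : Type*} [CommRing O] (f g h : O) :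
    (O ⧸ Ideal.span {f, g * h}) → O ⧸ Ideal.span {f, g} :=
  Ideal.Quotient.factor (S := Ideal.span {f, g * h}) (T := Ideal.span {f, g})
    (by
      rw [Ideal.span_le]
      rintro x hx
      simp only [Set.mem_insert_iff, Set.mem_singleton_iff] at hx
      rcases hx with rfl | rfl
      · exact Ideal.subset_span (Set.mem_insert _ _)
      · exact Ideal.mul_mem_right h _ (Ideal.subset_span (Set.mem_insert_of_mem _ rfl)))

/-- Lemma 1.5, case (ii): for `𝒪` a commutative ring, `(f)` a prime ideal, `g ∉ (f)` and `h` arbitrary, the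
sequence `0 → 𝒪/(f,h) → 𝒪/(f,gh) → 𝒪/(f,g) → 0` is exact, the first map being
multiplication by `g` and the second the natural surjection. -/
theorem exact_mul_quotient_seq_of_span_isPrime {O : Type*} [CommRing O]
    (f g h : O) (hf : (Ideal.span {f}).IsPrime) (hg : g ∉ Ideal.span {f}) :
    Function.Injective (mulQMap f g h) ∧
    Function.Exact (mulQMap f g h) (projQMap f g h) ∧
    Function.Surjective (projQMap f g h) := by
  constructor
  · rw [← LinearMap.ker_eq_bot, LinearMap.ker_eq_bot']
    intro m hm
    obtain ⟨x, rfl⟩ := Ideal.Quotient.mk_surjective m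
    have hx : g * x ∈ Ideal.span {f, g * h} := by
      rw [← Ideal.Quotient.eq_zero_iff_mem]
      exact hm
    rw [Ideal.mem_span_pair] at hx
    obtain ⟨a, b, hab⟩ := hx
    have hmem : g * (x - b * h) ∈ Ideal.span {f} := by
      rw [Ideal.mem_span_singleton]
      refine ⟨a, ?_⟩
      ring_nf
      ring_nf at hab
      linear_combination -hab
    have := hf.mem_or_mem hmem
    rcases this with h1 | h1
    · exact absurd h1 hg
    · rw [Ideal.mem_span_singleton] at h1
      obtain ⟨c, hc⟩ := h1
      have : x ∈ Ideal.span {f, h} := by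
        rw [Ideal.mem_span_pair]
        exact ⟨c, b, by linear_combination -hc⟩
      rwa [← Ideal.Quotient.eq_zero_iff_mem] at this
  constructor
  · intro y
    obtain ⟨x, rfl⟩ := Ideal.Quotient.mk_surjective y
    constructor
    · intro hy
      have hx : x ∈ Ideal.span {f, g} := by
        rw [← Ideal.Quotient.eq_zero_iff_mem]
        simpa [projQMap, Ideal.Quotient.factor_mk] using hy
      rw [Ideal.mem_span_pair] at hx
      obtain ⟨a, b, hab⟩ := hx
      refine ⟨Ideal.Quotient.mk _ b, ?_⟩
      have : mulQMap f g h (Ideal.Quotient.mk _ b) = Ideal.Quotient.mk _ (g * b) := by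
        rfl
      rw [this, Ideal.Quotient.mk_eq_mk_iff_sub_mem]
      rw [Ideal.mem_span_pair]
      exact ⟨-a, 0, by linear_combination -hab⟩
    · rintro ⟨m, hm⟩
      obtain ⟨z, rfl⟩ := Ideal.Quotient.mk_surjective m
      have hz : mulQMap f g h (Ideal.Quotient.mk _ z) = Ideal.Quotient.mk _ (g * z) := by
        rfl
      rw [hz, Ideal.Quotient.mk_eq_mk_iff_sub_mem, Ideal.mem_span_pair] at hm
      obtain ⟨a, b, hab⟩ := hm
      have hx : x ∈ Ideal.span {f, g} := by
        rw [Ideal.mem_span_pair]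
        exact ⟨-a, z - b * h, by linear_combination -hab⟩
      have : projQMap f g h (Ideal.Quotient.mk _ x) = Ideal.Quotient.mk _ x := by
        simp [projQMap, Ideal.Quotient.factor_mk]
      rw [this, Ideal.Quotient.eq_zero_iff_mem]
      exact hx
  · intro y
    obtain ⟨x, rfl⟩ := Ideal.Quotient.mk_surjective y
    exact ⟨Ideal.Quotient.mk _ x, by simp [projQMap, Ideal.Quotient.factor_mk]⟩
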